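/- Let R be a commutative ring, J = (f1,…,fn), and suppose h ∈ R is integral over the ideal J. Then in the Rees algebra R[(J,h)t], any homogeneous prime ideal containing f·t for all f ∈ J must also contain h·t. Consequently the chart of the blowup of (J,h) corresponding to h is covered by the charts corresponding to the f_i. -/
import Mathlib


open Polynomial

/-- `h` is integral over the ideal `I`. -/
def IdealIntegral {R : Type*} [CommRing R] (I : Ideal R) (h : R) : Prop :=
  ∃ d : ℕ, 0 < d ∧ ∃ a : ℕ → R, (∀ j, 1 ≤ j → j ≤ d → a j ∈ I ^ j) ∧
    h ^ d + ∑ j ∈ Finset.range d, a (j + 1) * h ^ (d - (j + 1)) = 0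

/-- If `h` is integral over `J = (f 1, …, f n)`, then in the Rees algebra `R[(J,h)t]`
any homogeneous prime ideal containing `f i * t` for all `i` also contains `h * t`. -/
theorem stmt2 {R : Type*} [CommRing R] {n : ℕ} (f : Fin n → R) (h : R)
    (hint : IdealIntegral (Ideal.span (Set.range f)) h)
    (I' : Ideal R) (hI' : I' = Ideal.span (Set.range f) ⊔ Ideal.span {h})
    (P : Ideal (reesAlgebra I')) (hP : P.IsPrime)
    -- `P` is homogeneous: it contains each graded component of each of its elements
    (hhom : ∀ x ∈ P, ∀ k : ℕ, ∀ y : reesAlgebra I',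
      (y : R[X]) = Polynomial.monomial k ((x : R[X]).coeff k) → y ∈ P)
    -- `f i * t ∈ P` for all `i`
    (hfP : ∀ i : Fin n, ∀ y : reesAlgebra I',
      (y : R[X]) = Polynomial.C (f i) * Polynomial.X → y ∈ P) :
    -- then `h * t ∈ P`
    ∀ y : reesAlgebra I', (y : R[X]) = Polynomial.C h * Polynomial.X → y ∈ P := by
  set J : Ideal R := Ideal.span (Set.range f) with hJ
  have hJI : J ≤ I' := hI' ▸ le_sup_left
  have hJpow : ∀ k : ℕ, J ^ k ≤ I' ^ k := fun k => Ideal.pow_right_mono hJI k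
  -- Lemma A : monomial 1 b ∈ P for b ∈ J
  have lemA : ∀ b ∈ J, ∀ y : reesAlgebra I', (y : R[X]) = monomial 1 b → y ∈ P := by
    intro b hb
    induction hb using Submodule.span_induction with
    | mem x hx =>
      obtain ⟨i, rfl⟩ := hx
      intro y hy
      exact hfP i y (by rw [hy, ← C_mul_X_pow_eq_monomial, pow_one])
    | zero =>
      intro y hy
      have : y = 0 := Subtype.ext (by simp [hy])
      rw [this]; exact P.zero_mem
    | add x z hx hz ihx ihz =>
      intro y hy
      have hx1 : monomial 1 x ∈ reesAlgebra I' :=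
        reesAlgebra.monomial_mem.2 (by simpa using hJI hx)
      have hz1 : monomial 1 z ∈ reesAlgebra I' :=
        reesAlgebra.monomial_mem.2 (by simpa using hJI hz)
      have : y = ⟨monomial 1 x, hx1⟩ + ⟨monomial 1 z, hz1⟩ :=
        Subtype.ext (by simp [hy])
      rw [this]
      exact P.add_mem (ihx _ rfl) (ihz _ rfl)
    | smul r x hx ihx =>
      intro y hy
      have hx1 : monomial 1 x ∈ reesAlgebra I' :=
        reesAlgebra.monomial_mem.2 (by simpa using hJI hx)
      have hr : (C r : R[X]) ∈ reesAlgebra I' := by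
        simpa using (reesAlgebra I').algebraMap_mem r
      have : y = (⟨C r, hr⟩ : reesAlgebra I') * ⟨monomial 1 x, hx1⟩ :=
        Subtype.ext (by simp [hy, smul_eq_mul, C_mul_monomial])
      rw [this]
      exact P.mul_mem_left _ (ihx _ rfl)
  -- Lemma B : monomial (k+1) a ∈ P for a ∈ J^(k+1)
  have lemB : ∀ k : ℕ, ∀ a ∈ J ^ (k + 1), ∀ y : reesAlgebra I',
      (y : R[X]) = monomial (k + 1) a → y ∈ P := by
    intro k
    induction k with
    | zero => intro a ha; exact lemA a (by simpa using ha)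
    | succ k ih =>
      intro a ha
      rw [pow_succ] at ha
      induction ha using Submodule.mul_induction_on' with
      | mem_mul_mem x hx b hb =>
        intro y hy
        have hxm : monomial (k + 1) x ∈ reesAlgebra I' :=
          reesAlgebra.monomial_mem.2 (hJpow _ hx)
        have hbm : monomial 1 b ∈ reesAlgebra I' :=
          reesAlgebra.monomial_mem.2 (by simpa using hJI hb)
        have : y = (⟨monomial (k + 1) x, hxm⟩ : reesAlgebra I') * ⟨monomial 1 b, hbm⟩ :=
          Subtype.ext (by simp [hy, monomial_mul_monomial])
        rw [this]
        exact P.mul_mem_left _ (lemA b hb _ rfl)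
      | add x hx z hz ihx ihz =>
        intro y hy
        have hxm : monomial (k + 1 + 1) x ∈ reesAlgebra I' := by
          refine reesAlgebra.monomial_mem.2 (hJpow _ ?_)
          rw [pow_succ]; exact hx
        have hzm : monomial (k + 1 + 1) z ∈ reesAlgebra I' := by
          refine reesAlgebra.monomial_mem.2 (hJpow _ ?_)
          rw [pow_succ]; exact hz
        have : y = ⟨monomial (k + 1 + 1) x, hxm⟩ + ⟨monomial (k + 1 + 1) z, hzm⟩ :=
          Subtype.ext (by simp [hy])
        rw [this]
        exact P.add_mem (ihx _ rfl) (ihz _ rfl)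
  -- main argument
  intro y hy
  obtain ⟨d, hd, a, ha, heq⟩ := hint
  have hhd : h ^ d = -∑ j ∈ Finset.range d, a (j + 1) * h ^ (d - (j + 1)) :=
    eq_neg_of_add_eq_zero_left heq
  -- the summand elements
  have haj : ∀ j ∈ Finset.range d, a (j + 1) ∈ J ^ (j + 1) := fun j hj =>
    ha (j + 1) (Nat.succ_le_succ (Nat.zero_le j)) (Finset.mem_range.1 hj)
  have hyc : (y : R[X]) = monomial 1 h := by
    rw [hy, ← C_mul_X_pow_eq_monomial, pow_one]
  -- build z j : the monomial (j+1) (a (j+1)) element times y^(d-(j+1))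
  have hajm : ∀ j ∈ Finset.range d, monomial (j + 1) (a (j + 1)) ∈ reesAlgebra I' :=
    fun j hj => reesAlgebra.monomial_mem.2 (hJpow _ (haj j hj))
  classical
  let z : ℕ → reesAlgebra I' := fun j =>
    if hj : j ∈ Finset.range d then
      (⟨monomial (j + 1) (a (j + 1)), hajm j hj⟩ : reesAlgebra I') * y ^ (d - (j + 1))
    else 0
  have hzP : ∀ j ∈ Finset.range d, z j ∈ P := by
    intro j hj
    simp only [z, dif_pos hj]
    exact P.mul_mem_right _ (lemB j _ (haj j hj) _ rfl)
  have hzc : ∀ j ∈ Finset.range d,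
      ((z j : reesAlgebra I') : R[X]) = monomial d (a (j + 1) * h ^ (d - (j + 1))) := by
    intro j hj
    have hjd : j + 1 ≤ d := Finset.mem_range.1 hj
    simp only [z, dif_pos hj]
    push_cast
    rw [hyc, monomial_pow, monomial_mul_monomial, one_mul]
    have hdd : j + 1 + (d - (j + 1)) = d := by omega
    rw [hdd]
  have key : y ^ d = -∑ j ∈ Finset.range d, z j := by
    apply Subtype.ext
    push_cast
    rw [hyc, monomial_pow, one_mul, hhd]
    rw [Finset.sum_congr rfl hzc]
    simp [Finset.sum_congr, map_sum]
  have : y ^ d ∈ P := by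
    rw [key]
    exact P.neg_mem (Ideal.sum_mem P hzP)
  exact hP.mem_of_pow_mem d this
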